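/- Every finite-dimensional associative division algebra over the real numbers is isomorphic as an ℝ-algebra to ℝ, to ℂ, or to the quaternions ℍ. (Frobenius's theorem, 1877.) -/

import Mathlib

open Polynomial Quaternion

section FrobeniusAux

variable {D : Type*} [DivisionRing D] [Algebra ℝ D] [FiniteDimensional ℝ D]

private lemma frob_quad (x : D) (hx : x ∉ Set.range (algebraMap ℝ D)) :
    ∃ (s t : ℝ) (u : D), t ≠ 0 ∧ u * u = -1 ∧ x = algebraMap ℝ D s + t • u := by
  have hint : IsIntegral ℝ x := IsIntegral.of_finite ℝ x
  have hirr := minpoly.irreducible hint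
  have hmonic := minpoly.monic hint
  have hd2 : (minpoly ℝ x).natDegree ≤ 2 := hirr.natDegree_le_two
  have hd0 : 0 < (minpoly ℝ x).natDegree := minpoly.natDegree_pos hint
  have hd1 : (minpoly ℝ x).natDegree ≠ 1 := by
    intro h
    apply hx
    have heq : minpoly ℝ x = X + C ((minpoly ℝ x).coeff 0) := hmonic.eq_X_add_C h
    have h0 := minpoly.aeval ℝ x
    rw [heq] at h0
    simp only [map_add, aeval_X, aeval_C] at h0
    refine ⟨-(minpoly ℝ x).coeff 0, ?_⟩
    rw [map_neg]
    exact (eq_neg_of_add_eq_zero_left h0).symm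
  have hdeg : (minpoly ℝ x).natDegree = 2 := by omega
  set a : ℝ := (minpoly ℝ x).coeff 1 with ha
  set b : ℝ := (minpoly ℝ x).coeff 0 with hb
  have hsum : x * x + a • x + b • (1 : D) = 0 := by
    have h0 := minpoly.aeval ℝ x
    have hlt : (minpoly ℝ x).natDegree < 3 := by omega
    rw [Polynomial.aeval_eq_sum_range' hlt] at h0
    have hc2 : (minpoly ℝ x).coeff 2 = 1 := by
      have := hmonic.coeff_natDegree
      rwa [hdeg] at this
    simp only [Finset.sum_range_succ, Finset.sum_range_zero, zero_add, pow_zero, pow_one,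
      hc2, one_smul, pow_two] at h0
    linear_combination (norm := module) h0
  have hxx : x * x = -(a • x) - b • (1:D) := by
    linear_combination (norm := module) hsum
  set y : D := x + (a / 2) • 1 with hy
  set c : ℝ := a ^ 2 / 4 - b with hc
  have hyy : y * y = c • (1 : D) := by
    rw [hy]
    simp only [add_mul, mul_add, smul_mul_assoc, mul_smul_comm, one_mul, mul_one, smul_smul, hxx]
    match_scalars <;> ring
  have hcneg : c < 0 := by
    by_contra hge
    push_neg at hge
    set r : ℝ := Real.sqrt c with hr
    have hr2 : r * r = c := Real.mul_self_sqrt hge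
    have hr2' : r ^ 2 = a ^ 2 / 4 - b := by rw [sq, hr2, hc]
    have hzero : (y - r • 1) * (y + r • 1) = 0 := by
      simp only [sub_mul, mul_add, smul_mul_assoc, mul_smul_comm, smul_smul, one_mul, mul_one,
        hyy]
      match_scalars <;> linarith [hr2']
    rcases mul_eq_zero.mp hzero with h | h
    · apply hx
      refine ⟨r - a / 2, ?_⟩
      have h1 : y = r • (1:D) := by linear_combination (norm := module) h
      rw [hy] at h1
      rw [Algebra.algebraMap_eq_smul_one]
      linear_combination (norm := module) -h1
    · apply hx
      refine ⟨-r - a / 2, ?_⟩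
      have h1 : y = -(r • (1:D)) := by linear_combination (norm := module) h
      rw [hy] at h1
      rw [Algebra.algebraMap_eq_smul_one]
      linear_combination (norm := module) -h1
  set t : ℝ := Real.sqrt (-c) with htdef
  have htpos : 0 < t := Real.sqrt_pos.mpr (by linarith)
  have ht2 : t * t = -c := Real.mul_self_sqrt (by linarith)
  refine ⟨-(a / 2), t, t⁻¹ • y, htpos.ne', ?_, ?_⟩
  · simp only [smul_mul_assoc, mul_smul_comm, hyy, smul_smul]
    have hval : t⁻¹ * (t⁻¹ * c) = -1 := by
      have : t ≠ 0 := htpos.ne'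
      field_simp
      linarith
    rw [hval, neg_one_smul]
  · rw [Algebra.algebraMap_eq_smul_one, smul_smul, mul_inv_cancel₀ htpos.ne', one_smul, hy]
    match_scalars <;> ring

private lemma frob_comm (i : D) (hi : i * i = -1) (x : D) (hcomm : i * x = x * i) :
    ∃ α β : ℝ, x = algebraMap ℝ D α + β • i := by
  by_cases hr : x ∈ Set.range (algebraMap ℝ D)
  · obtain ⟨α, rfl⟩ := hr
    exact ⟨α, 0, by simp⟩
  obtain ⟨s, t, u, ht, hu, hxu⟩ := frob_quad x hr
  have hui : i * u = u * i := by
    have h1 : i * x = algebraMap ℝ D s * i + t • (i * u) := by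
      rw [hxu, mul_add, mul_smul_comm, ← Algebra.commutes]
    have h2 : x * i = algebraMap ℝ D s * i + t • (u * i) := by
      rw [hxu, add_mul, smul_mul_assoc]
    rw [h1, h2] at hcomm
    have := add_left_cancel hcomm
    exact smul_right_injective D ht this
  have hzero : (u - i) * (u + i) = 0 := by
    rw [sub_mul, mul_add, mul_add, hu, hi, hui]
    abel
  rcases mul_eq_zero.mp hzero with h | h
  · have h1 : u = i := by linear_combination (norm := noncomm_ring) h
    exact ⟨s, t, by rw [hxu, h1]⟩
  · have h1 : u = -i := by linear_combination (norm := noncomm_ring) h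
    exact ⟨s, -t, by rw [hxu, h1]; module⟩

end FrobeniusAux

/-- Frobenius, 1877: Every finite-dimensional associative division algebra
over `ℝ` is isomorphic as an `ℝ`-algebra to `ℝ`, `ℂ`, or the quaternions `ℍ`. -/
theorem stmt_7 (D : Type*) [DivisionRing D] [Algebra ℝ D] [FiniteDimensional ℝ D] :
    Nonempty (D ≃ₐ[ℝ] ℝ) ∨ Nonempty (D ≃ₐ[ℝ] ℂ) ∨ Nonempty (D ≃ₐ[ℝ] Quaternion ℝ) := by
  by_cases hR : ∀ x : D, x ∈ Set.range (algebraMap ℝ D)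
  · left
    have hbij : Function.Bijective (Algebra.ofId ℝ D) := by
      constructor
      · intro p q h
        exact (algebraMap ℝ D).injective (by simpa [Algebra.ofId_apply] using h)
      · intro x
        obtain ⟨r, hr⟩ := hR x
        exact ⟨r, by simpa [Algebra.ofId_apply] using hr⟩
    exact ⟨(AlgEquiv.ofBijective (Algebra.ofId ℝ D) hbij).symm⟩
  push_neg at hR
  obtain ⟨x₀, hx₀⟩ := hR
  obtain ⟨s₀, t₀, i, ht₀, hi, -⟩ := frob_quad x₀ hx₀
  have hii : ∀ w : D, i * (i * w) = -w := fun w => by rw [← mul_assoc, hi, neg_one_mul]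
  have hine : i ≠ 0 := by
    intro h
    rw [h, mul_zero] at hi
    exact one_ne_zero (neg_eq_zero.mp hi.symm)
  have hdecomp : ∀ x : D, ∃ xp xm : D, x = xp + xm ∧ i * xp = xp * i ∧ i * xm = -(xm * i) := by
    intro x
    refine ⟨(2:ℝ)⁻¹ • (x - i * x * i), (2:ℝ)⁻¹ • (x + i * x * i), ?_, ?_, ?_⟩
    · rw [← smul_add]
      have h2 : x - i * x * i + (x + i * x * i) = (2:ℝ) • x := by
        match_scalars <;> ring
      rw [h2, smul_smul]
      norm_num
    · rw [mul_smul_comm, smul_mul_assoc]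
      congr 1
      simp only [mul_sub, sub_mul, mul_assoc, hii, hi, mul_neg_one, mul_neg, neg_neg, mul_one, neg_smul, one_smul]
      abel
    · rw [mul_smul_comm, smul_mul_assoc, ← smul_neg]
      congr 1
      simp only [mul_add, add_mul, mul_assoc, hii, hi, mul_neg_one, mul_neg, neg_add, neg_neg, mul_one, neg_smul, one_smul]
      abel
  by_cases hW : ∀ w : D, i * w = -(w * i) → w = 0
  · -- complex case
    right; left
    set f : ℂ →ₐ[ℝ] D := Complex.liftAux i hi with hf
    have hinj : Function.Injective f := f.toRingHom.injective
    have hsurj : Function.Surjective f := by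
      intro x
      obtain ⟨xp, xm, hx, hp, hm⟩ := hdecomp x
      rw [hW xm hm, add_zero] at hx
      obtain ⟨α, β, hxp⟩ := frob_comm i hi xp hp
      exact ⟨⟨α, β⟩, by simp [hf, Complex.liftAux_apply, hx, hxp]⟩
    exact ⟨(AlgEquiv.ofBijective f ⟨hinj, hsurj⟩).symm⟩
  · -- quaternion case
    right; right
    push_neg at hW
    obtain ⟨j₀, hj₀anti, hj₀ne⟩ := hW
    have hsq_comm : i * (j₀ * j₀) = (j₀ * j₀) * i := by
      rw [← mul_assoc, hj₀anti, neg_mul, mul_assoc, hj₀anti, mul_neg, neg_neg, ← mul_assoc]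
    obtain ⟨α, β, hsq⟩ := frob_comm i hi (j₀ * j₀) hsq_comm
    have hβ : β = 0 := by
      have h1 : j₀ * (j₀ * j₀) = (j₀ * j₀) * j₀ := (mul_assoc _ _ _).symm
      rw [hsq] at h1
      rw [mul_add, add_mul, mul_smul_comm, smul_mul_assoc, ← Algebra.commutes] at h1
      have h2 : β • (j₀ * i) = β • (i * j₀) := add_left_cancel h1
      rw [hj₀anti, smul_neg] at h2
      have h3 : (2 * β) • (j₀ * i) = 0 := by
        rw [two_mul, add_smul]
        nth_rewrite 1 [h2]
        abel
      rcases smul_eq_zero.mp h3 with h | h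
      · linarith
      · exact absurd h (mul_ne_zero hj₀ne hine)
    rw [hβ, zero_smul, add_zero] at hsq
    have hj₀notreal : ∀ r : ℝ, j₀ ≠ algebraMap ℝ D r := by
      intro r h
      apply hj₀ne
      have hcomm' : i * j₀ = j₀ * i := by rw [h]; exact (Algebra.commutes r i).symm
      have hneg : j₀ * i = -(j₀ * i) := by
        nth_rewrite 1 [← hcomm']
        exact hj₀anti
      have h3 : (2:ℝ) • (j₀ * i) = 0 := by
        rw [two_smul]
        nth_rewrite 1 [hneg]
        abel
      rcases smul_eq_zero.mp h3 with h' | h'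
      · norm_num at h'
      · rcases mul_eq_zero.mp h' with h'' | h''
        · exact h''
        · exact absurd h'' hine
    have hαneg : α < 0 := by
      by_contra hge
      push_neg at hge
      set r : ℝ := Real.sqrt α with hr
      have hr2 : r * r = α := Real.mul_self_sqrt hge
      have hzero : (j₀ - algebraMap ℝ D r) * (j₀ + algebraMap ℝ D r) = 0 := by
        rw [sub_mul, mul_add, mul_add, hsq, ← Algebra.commutes r j₀, ← map_mul, hr2]
        abel
      rcases mul_eq_zero.mp hzero with h | h
      · exact hj₀notreal r (by linear_combination (norm := noncomm_ring) h)
      · refine hj₀notreal (-r) ?_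
        rw [map_neg]
        linear_combination (norm := noncomm_ring) h
    set tj : ℝ := Real.sqrt (-α) with htj
    have htjpos : 0 < tj := Real.sqrt_pos.mpr (by linarith)
    have htj2 : tj * tj = -α := Real.mul_self_sqrt (by linarith)
    set j : D := tj⁻¹ • j₀ with hj
    have hjj : j * j = -1 := by
      rw [hj]
      simp only [smul_mul_assoc, mul_smul_comm, hsq, smul_smul]
      rw [Algebra.algebraMap_eq_smul_one, smul_smul]
      have hval : tj⁻¹ * tj⁻¹ * α = -1 := by
        have : tj ≠ 0 := htjpos.ne'
        field_simp
        linarith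
      rw [hval, neg_one_smul]
    have hij : i * j = -(j * i) := by
      rw [hj, mul_smul_comm, smul_mul_assoc, hj₀anti, smul_neg]
    let q : QuaternionAlgebra.Basis D (-1 : ℝ) (0 : ℝ) (-1 : ℝ) :=
      { i := i, j := j, k := i * j,
        i_mul_i := by rw [hi]; module
        j_mul_j := by rw [hjj]; module
        i_mul_j := rfl
        j_mul_i := by rw [zero_smul, zero_sub, ← neg_neg (j * i), ← hij] }
    set f : Quaternion ℝ →ₐ[ℝ] D := q.liftHom with hfq
    have hinj : Function.Injective f := f.toRingHom.injective
    have hsurj : Function.Surjective f := by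
      intro x
      obtain ⟨xp, xm, hx, hp, hm⟩ := hdecomp x
      obtain ⟨a1, b1, hxp⟩ := frob_comm i hi xp hp
      have hmj : i * (xm * j) = (xm * j) * i := by
        rw [← mul_assoc, hm, neg_mul, mul_assoc, hij, mul_neg, neg_neg, mul_assoc]
      obtain ⟨c1, d1, hxmj⟩ := frob_comm i hi (xm * j) hmj
      have hxm : xm = -((algebraMap ℝ D c1 + d1 • i) * j) := by
        have h1 : xm = -((xm * j) * j) := by
          rw [mul_assoc, hjj, mul_neg_one, neg_neg]
        rw [h1, hxmj]
      refine ⟨(⟨a1, b1, -c1, -d1⟩ : ℍ[ℝ,-1,0,-1]), ?_⟩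
      show q.lift _ = x
      rw [QuaternionAlgebra.Basis.lift]
      rw [hx, hxp, hxm]
      simp only [add_mul, smul_mul_assoc, Algebra.algebraMap_eq_smul_one, smul_mul_assoc, one_mul]
      match_scalars <;> ring
    exact ⟨(AlgEquiv.ofBijective f ⟨hinj, hsurj⟩).symm⟩
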